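/- Let U, D, τ, L, z be real numbers and let η > 0. Define ψ : ℝ → ℝ by ψ(u) = U − τ + (U/η − U + D + τ)·exp(u/η). Then ∫₀^z ψ(u) du + τ·z + (1 − z)·U ≤ η·max(ψ(z) − D, L). -/

import Mathlib

/-- Pseudo-cost upper bound against max(ψ(z) − D, L) (Theorem 3.2, PCM competitiveness). -/
theorem pcm_pseudo_cost_le (U D τ L z η : ℝ) (hη : 0 < η)
    (ψ : ℝ → ℝ)
    (hψ : ∀ u, ψ u = U - τ + (U / η - U + D + τ) * Real.exp (u / η)) :
    (∫ u in (0 : ℝ)..z, ψ u) + τ * z + (1 - z) * U ≤ η * max (ψ z - D) L := by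
  have hne : η ≠ 0 := hη.ne'
  have hint : (∫ u in (0 : ℝ)..z, ψ u)
      = (U - τ) * z + (U / η - U + D + τ) * (η * (Real.exp (z / η) - Real.exp 0)) := by
    simp only [hψ]
    rw [intervalIntegral.integral_add (by apply Continuous.intervalIntegrable; continuity) (by apply Continuous.intervalIntegrable; continuity)]
    rw [intervalIntegral.integral_const, intervalIntegral.integral_const_mul]
    have : (∫ u in (0 : ℝ)..z, Real.exp (u / η)) = η * (Real.exp (z / η) - Real.exp 0) := by
      have := intervalIntegral.integral_comp_div (a := 0) (b := z) (c := η) Real.exp hne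
      rw [this, integral_exp]
      simp
    rw [this]
    ring_nf
  have key : (∫ u in (0 : ℝ)..z, ψ u) + τ * z + (1 - z) * U = η * (ψ z - D) := by
    rw [hint, hψ]
    field_simp
    rw [Real.exp_zero]
    ring
  rw [key]
  have := le_max_left (ψ z - D) L
  nlinarith [this, hη]
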